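/- arXiv:2211.10498 — 2 statements merged into one kernel-verified Lean document; each statement's English description precedes it below -/
import Mathlib

section
/- For μ<0 and ν>0 with suitable magnitudes (specifically those arising as μ=−H'(1/2+σ)/(2σ), ν=H'(1/2+σ)/σ for σ∈(0,1/2)), the equation H'(u)=μ+νu has exactly three solutions in (0,1), located at u=1/2−σ, u=1/2, and u=1/2+σ. -/
noncomputable def H (u : ℝ) : ℝ := -(u * Real.log u + (1 - u) * Real.log (1 - u))

noncomputable def fk (k u : ℝ) : ℝ := Real.log (1-u) - Real.log u + k*(u - 1/2)
noncomputable def fk' (k u : ℝ) : ℝ := k - (1-u)⁻¹ - u⁻¹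

lemma derivH (u : ℝ) (h0 : 0 < u) (h1 : u < 1) :
    deriv H u = Real.log (1-u) - Real.log u := by
  have h1' : (1:ℝ) - u ≠ 0 := by linarith
  have hd : HasDerivAt H (Real.log (1-u) - Real.log u) u := by
    have d1 : HasDerivAt (fun x : ℝ => x * Real.log x) (Real.log u + 1) u := by
      have := (hasDerivAt_id u).mul (Real.hasDerivAt_log h0.ne')
      refine this.congr_deriv ?_
      field_simp
      simp only [id]; ring
    have d2 : HasDerivAt (fun x : ℝ => (1-x) * Real.log (1-x))
        (-(Real.log (1-u) + 1)) u := by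
      have hsub : HasDerivAt (fun x : ℝ => 1 - x) (-1) u := by
        simpa using (hasDerivAt_id' u).const_sub (1:ℝ)
      have hl : HasDerivAt (fun x : ℝ => Real.log (1-x)) (-1 / (1-u)) u := hsub.log h1'
      have := hsub.mul hl
      refine this.congr_deriv ?_
      field_simp
      ring
    have := (d1.add d2).neg
    refine this.congr_deriv ?_
    ring
  rw [hd.deriv]

lemma hasDerivAt_fk (k u : ℝ) (h0 : u ≠ 0) (h1 : (1:ℝ) - u ≠ 0) :
    HasDerivAt (fk k) (fk' k u) u := by
  have hsub : HasDerivAt (fun x : ℝ => 1 - x) (-1) u := by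
    simpa using (hasDerivAt_id' u).const_sub (1:ℝ)
  have hl1 : HasDerivAt (fun x : ℝ => Real.log (1-x)) (-1 / (1-u)) u := hsub.log h1
  have hl2 : HasDerivAt Real.log u⁻¹ u := Real.hasDerivAt_log h0
  have hl3 : HasDerivAt (fun x : ℝ => k * (x - 1/2)) k u := by
    have := ((hasDerivAt_id u).sub_const (1/2:ℝ)).const_mul k
    simpa using this
  have := (hl1.sub hl2).add hl3
  refine this.congr_deriv ?_
  unfold fk' ; field_simp ; ring

lemma hasDerivAt_fk' (k u : ℝ) (h0 : u ≠ 0) (h1 : (1:ℝ) - u ≠ 0) :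
    HasDerivAt (fk' k) (u⁻¹^2 - ((1-u)⁻¹)^2) u := by
  have hsub : HasDerivAt (fun x : ℝ => 1 - x) (-1) u := by
    simpa using (hasDerivAt_id' u).const_sub (1:ℝ)
  have d1 : HasDerivAt (fun x : ℝ => ((1:ℝ)-x)⁻¹) (-(-1) / (1-u)^2) u := hsub.inv h1
  have d2 : HasDerivAt (fun x : ℝ => x⁻¹) (-1 / u^2) u := (hasDerivAt_id u).inv h0
  have := ((hasDerivAt_const u k).sub d1).sub d2
  refine this.congr_deriv ?_
  field_simp
  ring

lemma contOn_fk (k : ℝ) : ContinuousOn (fk k) (Set.Ico (1/2:ℝ) 1) := by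
  intro x hx
  obtain ⟨hx1, hx2⟩ := hx
  have h0 : x ≠ 0 := by intro h; rw [h] at hx1; norm_num at hx1
  have h1 : (1:ℝ) - x ≠ 0 := by intro h; rw [sub_eq_zero] at h; exact hx2.ne h.symm
  exact (hasDerivAt_fk k x h0 h1).continuousAt.continuousWithinAt

lemma strictConcave_fk (k : ℝ) :
    StrictConcaveOn ℝ (Set.Ico (1/2:ℝ) 1) (fk k) := by
  apply strictConcaveOn_of_deriv2_neg (convex_Ico _ _) (contOn_fk k)
  intro x hx
  rw [interior_Ico] at hx
  obtain ⟨hx1, hx2⟩ := hx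
  have hx0 : (0:ℝ) < x := by linarith
  have h0 : x ≠ 0 := hx0.ne'
  have h1 : (1:ℝ) - x ≠ 0 := by intro h; rw [sub_eq_zero] at h; exact hx2.ne h.symm
  have heq : deriv (fk k) =ᶠ[nhds x] fk' k := by
    filter_upwards [Ioo_mem_nhds hx0 hx2] with y hy
    have hy0 : y ≠ 0 := hy.1.ne'
    have hy1 : (1:ℝ) - y ≠ 0 := by intro h; rw [sub_eq_zero] at h; exact hy.2.ne h.symm
    exact (hasDerivAt_fk k y hy0 hy1).deriv
  have : deriv^[2] (fk k) x = x⁻¹^2 - ((1-x)⁻¹)^2 := by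
    show deriv (deriv (fk k)) x = _
    rw [Filter.EventuallyEq.deriv_eq heq, (hasDerivAt_fk' k x h0 h1).deriv]
  rw [this]
  have hlt : (1:ℝ) - x < x := by linarith
  have hpos : (0:ℝ) < 1 - x := by linarith
  have : x⁻¹ < (1-x)⁻¹ := by
    exact inv_strictAnti₀ hpos hlt
  have hxi : (0:ℝ) < x⁻¹ := by positivity
  nlinarith [this, hxi]

lemma fk_symm (k u : ℝ) : fk k (1-u) = -fk k u := by
  unfold fk
  have : (1:ℝ) - (1-u) = u := by ring
  rw [this]
  ring

lemma fk_half (k : ℝ) : fk k (1/2) = 0 := by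
  unfold fk; norm_num

-- no strictly concave function on Ico (1/2) 1 has three zeros
lemma no_three (k x y z : ℝ) (hx : x ∈ Set.Ico (1/2:ℝ) 1) (hz : z ∈ Set.Ico (1/2:ℝ) 1)
    (hxy : x < y) (hyz : y < z) (hfx : fk k x = 0) (hfy : fk k y = 0)
    (hfz : fk k z = 0) : False := by
  have hzx : (0:ℝ) < z - x := by linarith
  set a : ℝ := (z - y) / (z - x) with ha_def
  set b : ℝ := (y - x) / (z - x) with hb_def
  have ha : 0 < a := by apply div_pos; linarith; linarith
  have hb : 0 < b := by apply div_pos; linarith; linarith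
  have hne : z - x ≠ 0 := hzx.ne'
  have hab : a + b = 1 := by
    rw [ha_def, hb_def, ← add_div, div_eq_one_iff_eq hne]
    ring
  have hcomb : a • x + b • z = y := by
    simp only [smul_eq_mul, ha_def, hb_def]
    field_simp
    ring
  have := (strictConcave_fk k).2 hx hz (by linarith : x ≠ z) ha hb hab
  rw [hcomb, hfx, hfy, hfz] at this
  have h0 : a • (0:ℝ) + b • (0:ℝ) = 0 := by simp
  rw [h0] at this
  exact lt_irrefl 0 this

lemma fk_unique_right (k u : ℝ) (hu1 : 1/2 < u) (hu2 : u < 1)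
    (σ : ℝ) (hσ : 0 < σ) (hσ' : σ < 1/2)
    (hroot : fk k (1/2 + σ) = 0) (hfu : fk k u = 0) : u = 1/2 + σ := by
  by_contra hne
  rcases lt_or_gt_of_ne hne with h | h
  · exact no_three k (1/2) u (1/2+σ) (by constructor <;> norm_num)
      (by constructor <;> [linarith; linarith]) hu1 h (fk_half k) hfu hroot
  · exact no_three k (1/2) (1/2+σ) u (by constructor <;> norm_num)
      (by constructor <;> [linarith; linarith]) (by linarith) h (fk_half k) hroot hfu

theorem stmt12 (σ : ℝ) (hσ : 0 < σ) (hσ' : σ < 1/2) :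
    {u : ℝ | u ∈ Set.Ioo (0:ℝ) 1 ∧
        deriv H u = -(deriv H (1/2 + σ)) / (2 * σ) + (deriv H (1/2 + σ) / σ) * u}
      = {1/2 - σ, 1/2, 1/2 + σ} := by
  have hσ0 : σ ≠ 0 := hσ.ne'
  have hc : deriv H (1/2 + σ) = Real.log (1/2 - σ) - Real.log (1/2 + σ) := by
    rw [derivH (1/2 + σ) (by linarith) (by linarith),
      show (1:ℝ) - (1/2 + σ) = 1/2 - σ from by ring]
  set c : ℝ := Real.log (1/2 - σ) - Real.log (1/2 + σ) with hc_def
  set k : ℝ := -c / σ with hk_def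
  have hline : ∀ u : ℝ, -c / (2 * σ) + (c / σ) * u = -(k * (u - 1/2)) := by
    intro u
    rw [hk_def]
    field_simp
    ring
  have hkey : ∀ u ∈ Set.Ioo (0:ℝ) 1,
      (deriv H u = -(deriv H (1/2 + σ)) / (2 * σ) + (deriv H (1/2 + σ) / σ) * u
        ↔ fk k u = 0) := by
    intro u hu
    rw [derivH u hu.1 hu.2, hc, hline u]
    unfold fk
    constructor <;> intro h <;> linarith
  have hroot : fk k (1/2 + σ) = 0 := by
    unfold fk
    have : (1:ℝ) - (1/2 + σ) = 1/2 - σ := by ring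
    rw [this, hk_def, hc_def]
    field_simp
    ring
  have hrootl : fk k (1/2 - σ) = 0 := by
    have : (1:ℝ) - (1/2 + σ) = 1/2 - σ := by ring
    rw [← this, fk_symm, hroot, neg_zero]
  ext u
  simp only [Set.mem_setOf_eq, Set.mem_insert_iff, Set.mem_singleton_iff]
  constructor
  · rintro ⟨hu, heq⟩
    rw [hkey u hu] at heq
    rcases lt_trichotomy u (1/2) with h | h | h
    · left
      have hv1 : 1/2 < 1 - u := by linarith
      have hv2 : 1 - u < 1 := by linarith [hu.1]
      have hfv : fk k (1 - u) = 0 := by rw [fk_symm, heq, neg_zero]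
      have := fk_unique_right k (1-u) hv1 hv2 σ hσ hσ' hroot hfv
      linarith
    · right; left; exact h
    · right; right
      exact fk_unique_right k u h hu.2 σ hσ hσ' hroot heq
  · intro h
    rcases h with h | h | h <;> subst h
    · refine ⟨⟨by linarith, by linarith⟩, ?_⟩
      rw [hkey _ ⟨by linarith, by linarith⟩]
      exact hrootl
    · refine ⟨⟨by norm_num, by norm_num⟩, ?_⟩
      rw [hkey _ ⟨by norm_num, by norm_num⟩]
      exact fk_half k
    · refine ⟨⟨by linarith, by linarith⟩, ?_⟩
      rw [hkey _ ⟨by linarith, by linarith⟩]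
      exact hroot
end

section
/- Fix e∈(0,1/2) and define F(A,B) = [H(e+A+B)+H(e−A+B)−2H(e)−2B H'(e)] / (A³−B³)^{2/3} for 0<B<A with e+A+B<1 and e−A+B>0. If e<e₀=(3−√3)/6, then there exist A,B with 0<B<A such that F(A,B) > H''(e). -/
noncomputable def h1 (u : ℝ) : ℝ := Real.log (1 - u) - Real.log u
noncomputable def h2 (u : ℝ) : ℝ := -(1/u) - 1/(1-u)
noncomputable def h3 (u : ℝ) : ℝ := 1/u^2 - 1/(1-u)^2
noncomputable def h4 (u : ℝ) : ℝ := -(2/u^3) - 2/(1-u)^3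

lemma hasDerivAt_H {u : ℝ} (h0 : 0 < u) (hu1 : u < 1) : HasDerivAt H (h1 u) u := by
  have h1u : (0:ℝ) < 1 - u := by linarith
  have d1 : HasDerivAt (fun x : ℝ => x * Real.log x) (Real.log u + 1) u := by
    have := (hasDerivAt_id u).fun_mul (Real.hasDerivAt_log h0.ne')
    refine this.congr_deriv ?_
    simp [h0.ne']
  have d2 : HasDerivAt (fun x : ℝ => (1 - x) * Real.log (1 - x))
      (-(Real.log (1 - u) + 1)) u := by
    have dinner : HasDerivAt (fun x : ℝ => 1 - x) (-1) u := by
      simpa using (hasDerivAt_const u (1:ℝ)).fun_sub (hasDerivAt_id u)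
    have := ((hasDerivAt_id (1-u)).fun_mul (Real.hasDerivAt_log h1u.ne')).comp u dinner
    refine this.congr_deriv ?_
    simp [h1u.ne']
  have := (d1.fun_add d2).fun_neg
  have h : H = fun x : ℝ => -(x * Real.log x + (1 - x) * Real.log (1 - x)) := rfl
  rw [h]
  refine this.congr_deriv ?_
  simp [h1]; ring

lemma hasDerivAt_h1 {u : ℝ} (h0 : 0 < u) (hu1 : u < 1) : HasDerivAt h1 (h2 u) u := by
  have h1u : (0:ℝ) < 1 - u := by linarith
  have dinner : HasDerivAt (fun x : ℝ => 1 - x) (-1) u := by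
    simpa using (hasDerivAt_const u (1:ℝ)).fun_sub (hasDerivAt_id u)
  have dA : HasDerivAt (fun x : ℝ => Real.log (1 - x)) (-(1/(1-u))) u := by
    have := (Real.hasDerivAt_log h1u.ne').comp u dinner
    refine this.congr_deriv ?_
    simp
  have dB : HasDerivAt Real.log (1/u) u := by
    simpa [one_div] using Real.hasDerivAt_log h0.ne'
  have := dA.fun_sub dB
  have h : h1 = fun x : ℝ => Real.log (1 - x) - Real.log x := rfl
  rw [h]
  refine this.congr_deriv ?_
  simp [h2]; ring

lemma hasDerivAt_h2 {u : ℝ} (h0 : 0 < u) (hu1 : u < 1) : HasDerivAt h2 (h3 u) u := by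
  have h1u : (0:ℝ) < 1 - u := by linarith
  have dinner : HasDerivAt (fun x : ℝ => 1 - x) (-1) u := by
    simpa using (hasDerivAt_const u (1:ℝ)).fun_sub (hasDerivAt_id u)
  have dA : HasDerivAt (fun x : ℝ => -(1/x)) (1/u^2) u := by
    have := (hasDerivAt_inv h0.ne').fun_neg
    refine (this.congr_deriv ?_).congr_of_eventuallyEq (Filter.Eventually.of_forall fun x => ?_)
    · simp
    · simp [one_div]
  have dB : HasDerivAt (fun x : ℝ => 1/(1-x)) (1/(1-u)^2) u := by
    have := ((hasDerivAt_inv h1u.ne').comp u dinner)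
    refine (this.congr_deriv ?_).congr_of_eventuallyEq (Filter.Eventually.of_forall fun x => ?_)
    · simp
    · simp [one_div]
  have := dA.fun_sub dB
  have h : h2 = fun x : ℝ => -(1/x) - 1/(1-x) := rfl
  rw [h]
  exact this

lemma hasDerivAt_h3 {u : ℝ} (h0 : 0 < u) (hu1 : u < 1) : HasDerivAt h3 (h4 u) u := by
  have h1u : (0:ℝ) < 1 - u := by linarith
  have dinner : HasDerivAt (fun x : ℝ => 1 - x) (-1) u := by
    simpa using (hasDerivAt_const u (1:ℝ)).fun_sub (hasDerivAt_id u)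
  have hu2 : (u^2) ≠ 0 := by positivity
  have h1u2 : ((1-u)^2) ≠ 0 := by positivity
  have dA : HasDerivAt (fun x : ℝ => 1/x^2) (-(2/u^3)) u := by
    have := (hasDerivAt_pow 2 u).fun_inv hu2
    refine (this.congr_deriv ?_).congr_of_eventuallyEq (Filter.Eventually.of_forall fun x => ?_)
    · field_simp; ring
    · simp [one_div]
  have dB : HasDerivAt (fun x : ℝ => 1/(1-x)^2) (2/(1-u)^3) u := by
    have dsq : HasDerivAt (fun x : ℝ => (1-x)^2) (2*(1-u)*(-1)) u := by
      exact ((hasDerivAt_pow 2 (1-u)).comp u dinner).congr_deriv (by push_cast; ring)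
    have := dsq.fun_inv (by positivity)
    refine (this.congr_deriv ?_).congr_of_eventuallyEq (Filter.Eventually.of_forall fun x => ?_)
    · field_simp
    · simp [one_div]
  have := dA.fun_sub dB
  have h : h3 = fun x : ℝ => 1/x^2 - 1/(1-x)^2 := rfl
  rw [h]
  exact this

lemma deriv_H_eq {u : ℝ} (h0 : 0 < u) (hu1 : u < 1) : deriv H u = h1 u :=
  (hasDerivAt_H h0 hu1).deriv

lemma iteratedDeriv_two_H {u : ℝ} (h0 : 0 < u) (hu1 : u < 1) :
    iteratedDeriv 2 H u = h2 u := by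
  have hev : deriv H =ᶠ[nhds u] h1 := by
    filter_upwards [Ioo_mem_nhds h0 hu1] with x hx
    exact deriv_H_eq hx.1 hx.2
  have : iteratedDeriv 2 H u = deriv (deriv H) u := by
    rw [show (2:ℕ) = 1 + 1 from rfl, iteratedDeriv_succ, iteratedDeriv_one]
  rw [this, hev.deriv_eq, (hasDerivAt_h1 h0 hu1).deriv]

lemma mono_aux {f f' : ℝ → ℝ} {p q : ℝ} (hp : 0 < p) (hq : q < 1)
    (hd : ∀ x, 0 < x → x < 1 → HasDerivAt f (f' x) x)
    (hpos : ∀ x ∈ Set.Ioo p q, 0 ≤ f' x) : MonotoneOn f (Set.Icc p q) := by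
  apply monotoneOn_of_deriv_nonneg (convex_Icc p q)
  · intro x hx
    exact (hd x (lt_of_lt_of_le hp hx.1) (lt_of_le_of_lt hx.2 hq)).continuousAt.continuousWithinAt
  · rw [interior_Icc]
    intro x hx
    exact (hd x (lt_trans hp hx.1) (lt_trans hx.2 hq)).differentiableAt.differentiableWithinAt
  · rw [interior_Icc]
    intro x hx
    rw [(hd x (lt_trans hp hx.1) (lt_trans hx.2 hq)).deriv]
    exact hpos x hx

lemma anti_aux {f f' : ℝ → ℝ} {p q : ℝ} (hp : 0 < p) (hq : q < 1)
    (hd : ∀ x, 0 < x → x < 1 → HasDerivAt f (f' x) x)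
    (hneg : ∀ x ∈ Set.Ioo p q, f' x ≤ 0) : AntitoneOn f (Set.Icc p q) := by
  apply antitoneOn_of_deriv_nonpos (convex_Icc p q)
  · intro x hx
    exact (hd x (lt_of_lt_of_le hp hx.1) (lt_of_le_of_lt hx.2 hq)).continuousAt.continuousWithinAt
  · rw [interior_Icc]
    intro x hx
    exact (hd x (lt_trans hp hx.1) (lt_trans hx.2 hq)).differentiableAt.differentiableWithinAt
  · rw [interior_Icc]
    intro x hx
    rw [(hd x (lt_trans hp hx.1) (lt_trans hx.2 hq)).deriv]
    exact hneg x hx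

noncomputable def ph0 (e M x : ℝ) : ℝ :=
  H x - H e - h1 e*(x-e) - h2 e*(x-e)^2/2 - h3 e*(x-e)^3/6 + M*(x-e)^4
noncomputable def ph1 (e M x : ℝ) : ℝ :=
  h1 x - h1 e - h2 e*(x-e) - h3 e*(x-e)^2/2 + 4*M*(x-e)^3
noncomputable def ph2 (e M x : ℝ) : ℝ :=
  h2 x - h2 e - h3 e*(x-e) + 12*M*(x-e)^2
noncomputable def ph3 (e M x : ℝ) : ℝ :=
  h3 x - h3 e + 24*M*(x-e)

lemma dpow (e : ℝ) (n : ℕ) (x : ℝ) :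
    HasDerivAt (fun y : ℝ => (y-e)^n) (n*(x-e)^(n-1)) x := by
  have := ((hasDerivAt_id x).sub_const e).fun_pow n
  simpa using this

lemma dph3 {e M x : ℝ} (h0 : 0 < x) (hx1 : x < 1) :
    HasDerivAt (ph3 e M) (h4 x + 24*M) x := by
  have D := ((hasDerivAt_h3 h0 hx1).sub_const (h3 e)).fun_add ((dpow e 1 x).const_mul (24*M))
  have h : ph3 e M = fun y => (h3 y - h3 e) + 24*M*(y-e)^1 := by
    funext y; unfold ph3; ring
  rw [h]
  refine D.congr_deriv ?_
  push_cast; ring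

lemma dph2 {e M x : ℝ} (h0 : 0 < x) (hx1 : x < 1) :
    HasDerivAt (ph2 e M) (ph3 e M x) x := by
  have D := (((hasDerivAt_h2 h0 hx1).sub_const (h2 e)).fun_sub
      ((dpow e 1 x).const_mul (h3 e))).fun_add ((dpow e 2 x).const_mul (12*M))
  have h : ph2 e M = fun y => ((h2 y - h2 e) - h3 e*(y-e)^1) + 12*M*(y-e)^2 := by
    funext y; unfold ph2; ring
  rw [h]
  refine D.congr_deriv ?_
  unfold ph3; push_cast; ring

lemma dph1 {e M x : ℝ} (h0 : 0 < x) (hx1 : x < 1) :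
    HasDerivAt (ph1 e M) (ph2 e M x) x := by
  have D := ((((hasDerivAt_h1 h0 hx1).sub_const (h1 e)).fun_sub
      ((dpow e 1 x).const_mul (h2 e))).fun_sub
      ((dpow e 2 x).const_mul (h3 e/2))).fun_add ((dpow e 3 x).const_mul (4*M))
  have h : ph1 e M = fun y => (((h1 y - h1 e) - h2 e*(y-e)^1) - (h3 e/2)*(y-e)^2) + 4*M*(y-e)^3 := by
    funext y; unfold ph1; ring
  rw [h]
  refine D.congr_deriv ?_
  unfold ph2; push_cast; ring

lemma dph0 {e M x : ℝ} (h0 : 0 < x) (hx1 : x < 1) :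
    HasDerivAt (ph0 e M) (ph1 e M x) x := by
  have D := ((((hasDerivAt_H h0 hx1).sub_const (H e)).fun_sub
      ((dpow e 1 x).const_mul (h1 e))).fun_sub
      ((dpow e 2 x).const_mul (h2 e/2))).fun_sub
      ((dpow e 3 x).const_mul (h3 e/6)) |>.fun_add ((dpow e 4 x).const_mul M)
  have h : ph0 e M = fun y =>
      ((((H y - H e) - h1 e*(y-e)^1) - (h2 e/2)*(y-e)^2) - (h3 e/6)*(y-e)^3) + M*(y-e)^4 := by
    funext y; unfold ph0; ring
  rw [h]
  refine D.congr_deriv ?_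
  unfold ph1; push_cast; ring

lemma taylor4 {a b e M : ℝ} (ha : 0 < a) (hb : b < 1)
    (hM : ∀ u ∈ Set.Icc a b, -(24*M) ≤ h4 u)
    (hea : e ∈ Set.Icc a b) :
    ∀ x ∈ Set.Icc a b, 0 ≤ ph0 e M x := by
  have hsub : Set.Icc a b ⊆ Set.Icc a b := subset_rfl
  have he0 : 0 < e := lt_of_lt_of_le ha hea.1
  have he1 : e < 1 := lt_of_le_of_lt hea.2 hb
  have z3 : ph3 e M e = 0 := by unfold ph3; ring
  have z2 : ph2 e M e = 0 := by unfold ph2; ring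
  have z1 : ph1 e M e = 0 := by unfold ph1; ring
  have z0 : ph0 e M e = 0 := by unfold ph0; ring
  have m3 : MonotoneOn (ph3 e M) (Set.Icc a b) := by
    refine mono_aux ha hb (fun x hx0 hx1 => dph3 hx0 hx1) (fun x hx => ?_)
    have := hM x ⟨le_of_lt hx.1, le_of_lt hx.2⟩
    linarith
  have s3 : ∀ x ∈ Set.Icc a b, e ≤ x → 0 ≤ ph3 e M x := by
    intro x hx hex
    have := m3 hea hx hex
    linarith
  have s3' : ∀ x ∈ Set.Icc a b, x ≤ e → ph3 e M x ≤ 0 := by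
    intro x hx hex
    have := m3 hx hea hex
    linarith
  have s2 : ∀ x ∈ Set.Icc a b, 0 ≤ ph2 e M x := by
    intro x hx
    rcases le_total e x with hex | hex
    · have m2 : MonotoneOn (ph2 e M) (Set.Icc e b) := by
        refine mono_aux he0 hb (fun y hy0 hy1 => dph2 hy0 hy1) (fun y hy => ?_)
        exact s3 y ⟨le_trans hea.1 (le_of_lt hy.1), le_of_lt hy.2⟩ (le_of_lt hy.1)
      have := m2 (Set.left_mem_Icc.2 hea.2) ⟨hex, hx.2⟩ hex
      linarith [z2]
    · have m2 : AntitoneOn (ph2 e M) (Set.Icc a e) := by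
        refine anti_aux ha he1 (fun y hy0 hy1 => dph2 hy0 hy1) (fun y hy => ?_)
        exact s3' y ⟨le_of_lt hy.1, le_trans (le_of_lt hy.2) hea.2⟩ (le_of_lt hy.2)
      have := m2 ⟨hx.1, hex⟩ (Set.right_mem_Icc.2 hea.1) hex
      linarith [z2]
  have m1 : MonotoneOn (ph1 e M) (Set.Icc a b) := by
    refine mono_aux ha hb (fun x hx0 hx1 => dph1 hx0 hx1) (fun x hx => ?_)
    exact s2 x ⟨le_of_lt hx.1, le_of_lt hx.2⟩
  intro x hx
  rcases le_total e x with hex | hex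
  · have m0 : MonotoneOn (ph0 e M) (Set.Icc e b) := by
      refine mono_aux he0 hb (fun y hy0 hy1 => dph0 hy0 hy1) (fun y hy => ?_)
      have := m1 hea ⟨le_trans hea.1 (le_of_lt hy.1), le_of_lt hy.2⟩ (le_of_lt hy.1)
      linarith [z1]
    have := m0 (Set.left_mem_Icc.2 hea.2) ⟨hex, hx.2⟩ hex
    linarith [z0]
  · have m0 : AntitoneOn (ph0 e M) (Set.Icc a e) := by
      refine anti_aux ha he1 (fun y hy0 hy1 => dph0 hy0 hy1) (fun y hy => ?_)
      have := m1 ⟨le_of_lt hy.1, le_trans (le_of_lt hy.2) hea.2⟩ hea (le_of_lt hy.2)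
      linarith [z1]
    have := m0 ⟨hx.1, hex⟩ (Set.right_mem_Icc.2 hea.1) hex
    linarith [z0]

set_option maxHeartbeats 2000000 in
theorem stmt16 (e : ℝ) (he : e ∈ Set.Ioo (0:ℝ) (1/2))
    (he0 : e < (3 - Real.sqrt 3) / 6) :
    ∃ A B : ℝ, 0 < B ∧ B < A ∧ e + A + B < 1 ∧ 0 < e - A + B ∧
      iteratedDeriv 2 H e <
        (H (e + A + B) + H (e - A + B) - 2 * H e - 2 * B * deriv H e)
          / (A ^ 3 - B ^ 3) ^ ((2:ℝ)/3) := by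
  obtain ⟨he1, he2⟩ := he
  have h1e : 0 < 1 - e := by linarith
  have h12e : 0 < 1 - 2*e := by linarith
  -- key quadratic inequality from e < (3-√3)/6
  have key : 0 < 6*e^2 - 6*e + 1 := by
    have hs : Real.sqrt 3 ^ 2 = 3 := Real.sq_sqrt (by norm_num)
    have hss : 0 ≤ Real.sqrt 3 := Real.sqrt_nonneg 3
    have ha : Real.sqrt 3 < 3 - 6*e := by linarith
    nlinarith [hs, hss, ha]
  -- derivative values
  have hd2neg : h2 e < 0 := by
    unfold h2
    have : 0 < 1/e := by positivity
    have : 0 < 1/(1-e) := by positivity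
    linarith
  have hd2val : -(h2 e) = 1/(e*(1-e)) := by
    unfold h2; field_simp; ring
  have hd3val : h3 e = (1-2*e)/(e^2*(1-e)^2) := by
    unfold h3; field_simp; ring
  have hd3pos : 0 < h3 e := by rw [hd3val]; positivity
  set c : ℝ := (1-2*e)/(2*e*(1-e)) with hc
  have hcpos : 0 < c := by rw [hc]; positivity
  have hc2 : h2 e * c = -(h3 e / 2) := by
    rw [hd3val, hc]; unfold h2; field_simp; ring
  set Mf : ℝ → ℝ := fun t => (1/(e-t)^3 + 1/(1-e-t)^3)/12 with hMf
  set G : ℝ → ℝ := fun t => 2 * Mf t * (1 + 6*c^2*t^2 + c^4*t^4) + (-(h2 e))*c^3*t with hG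
  have he3 : (0:ℝ) < e^3 := by positivity
  have h1e3 : (0:ℝ) < (1-e)^3 := by positivity
  have hG0 : G 0 < c * h3 e / 2 := by
    have hG0v : G 0 = (1/e^3 + 1/(1-e)^3)/6 := by
      simp only [hG, hMf]
      norm_num
      ring
    rw [hG0v, hd3val, hc]
    rw [div_lt_div_iff₀ (by norm_num) (by norm_num)]
    field_simp
    nlinarith [key, mul_pos he3 h1e3, sq_nonneg e, sq_nonneg (1-e), he1, h1e,
      mul_pos (mul_pos he3 h1e3) key, mul_pos (mul_pos he1 h1e) key]
  -- continuity of G at 0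
  have hGcont : ContinuousAt G 0 := by
    have hne1 : ((e - (0:ℝ))^3) ≠ 0 := by
      simp only [sub_zero]; positivity
    have hne2 : ((1 - e - (0:ℝ))^3) ≠ 0 := by
      simp only [sub_zero]; positivity
    have c1 : ContinuousAt (fun t:ℝ => 1/(e-t)^3) 0 :=
      ContinuousAt.div continuousAt_const (by fun_prop) hne1
    have c2 : ContinuousAt (fun t:ℝ => 1/(1-e-t)^3) 0 :=
      ContinuousAt.div continuousAt_const (by fun_prop) hne2
    have cM : ContinuousAt Mf 0 := by
      rw [hMf]
      exact ((c1.add c2).div_const 12)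
    rw [hG]
    refine ContinuousAt.add (ContinuousAt.mul (by exact (continuousAt_const.mul cM)) (by fun_prop)) (by fun_prop)
  -- choose δ
  obtain ⟨δ, hδG, hδe, hδ1e, hδpos⟩ :
      ∃ δ:ℝ, G δ < c * h3 e / 2 ∧ δ < e/2 ∧ δ < (1-e)/2 ∧ 0 < δ := by
    have ev1 : ∀ᶠ t in nhdsWithin (0:ℝ) (Set.Ioi 0), G t < c * h3 e / 2 :=
      (hGcont.eventually_lt continuousAt_const hG0).filter_mono nhdsWithin_le_nhds
    have ev2 : ∀ᶠ t in nhdsWithin (0:ℝ) (Set.Ioi 0), t < e/2 :=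
      eventually_nhdsWithin_of_eventually_nhds (eventually_lt_nhds (by positivity))
    have ev3 : ∀ᶠ t in nhdsWithin (0:ℝ) (Set.Ioi 0), t < (1-e)/2 :=
      eventually_nhdsWithin_of_eventually_nhds (eventually_lt_nhds (by positivity))
    have ev4 : ∀ᶠ t in nhdsWithin (0:ℝ) (Set.Ioi 0), 0 < t :=
      eventually_mem_nhdsWithin
    exact (((ev1.and ev2).and ev3).and ev4).exists.imp (fun t ht => ⟨ht.1.1.1, ht.1.1.2, ht.1.2, ht.2⟩)
  -- Taylor setup
  have ha : 0 < e - δ := by linarith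
  have hb : e + δ < 1 := by linarith
  have h1eδ : 0 < 1 - e - δ := by linarith
  set M : ℝ := Mf δ with hM
  have hMval : M = (1/(e-δ)^3 + 1/(1-e-δ)^3)/12 := rfl
  have hMpos : 0 < M := by rw [hMval]; positivity
  have hGδ' : 2*M*(1+6*c^2*δ^2+c^4*δ^4) + (-(h2 e))*c^3*δ < c * h3 e / 2 := hδG
  have hM24 : ∀ u ∈ Set.Icc (e-δ) (e+δ), -(24*M) ≤ h4 u := by
    intro u hu
    have hu0 : 0 < u := lt_of_lt_of_le ha hu.1
    have hu1 : 0 < 1 - u := by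
      have := hu.2; linarith
    have b1 : 1/u^3 ≤ 1/(e-δ)^3 := by
      apply one_div_le_one_div_of_le (by positivity)
      exact pow_le_pow_left₀ ha.le hu.1 3
    have b2 : 1/(1-u)^3 ≤ 1/(1-e-δ)^3 := by
      apply one_div_le_one_div_of_le (by positivity)
      apply pow_le_pow_left₀ h1eδ.le (by linarith [hu.2]) 3
    unfold h4
    rw [hMval]
    have e1 : 2/u^3 = 2*(1/u^3) := by ring
    have e2 : 2/(1-u)^3 = 2*(1/(1-u)^3) := by ring
    rw [e1, e2]
    linarith [b1, b2]
  have hTay := taylor4 (e := e) ha hb hM24 (Set.mem_Icc.2 ⟨by linarith, by linarith⟩)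
  -- choice of A
  set A : ℝ := min (δ/(1+c*δ)) (1/(2*c)) with hA
  have h1cd : 0 < 1 + c*δ := by positivity
  have hApos : 0 < A := lt_min (by positivity) (by positivity)
  have hcA : c*A ≤ 1/2 := by
    have h2c : 0 < 2*c := by positivity
    have : A ≤ 1/(2*c) := min_le_right _ _
    calc c*A ≤ c*(1/(2*c)) := by
          exact mul_le_mul_of_nonneg_left this hcpos.le
      _ = 1/2 := by field_simp
  have hAδ : A ≤ δ := le_trans (min_le_left _ _) (by
    apply div_le_self hδpos.le
    linarith [mul_pos hcpos hδpos])
  have hABδ : A + c*A^2 ≤ δ := by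
    have h1 : A ≤ δ/(1+c*δ) := min_le_left _ _
    have h2' : 1 + c*A ≤ 1 + c*δ := by
      have := mul_le_mul_of_nonneg_left hAδ hcpos.le
      linarith
    have h3 : A*(1+c*A) ≤ (δ/(1+c*δ))*(1+c*δ) :=
      mul_le_mul h1 h2' (by positivity) (by positivity)
    rw [div_mul_cancel₀ _ (ne_of_gt h1cd)] at h3
    have h4' : A + c*A^2 = A*(1+c*A) := by ring
    rw [h4']; exact h3
  set B : ℝ := c*A^2 with hB
  have hBpos : 0 < B := by rw [hB]; positivity
  have hBA : B < A := by
    rw [hB]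
    have : c*A^2 = (c*A)*A := by ring
    rw [this]
    have : (c*A)*A ≤ (1/2)*A := mul_le_mul_of_nonneg_right hcA hApos.le
    linarith
  clear_value B A M
  have hout1 : e + A + B < 1 := by
    linarith [hABδ]
  have hout2 : 0 < e - A + B := by
    have : A ≤ δ := hAδ
    linarith [hBpos]
  refine ⟨A, B, hBpos, hBA, hout1, hout2, ?_⟩
  rw [iteratedDeriv_two_H he1 (by linarith), deriv_H_eq he1 (by linarith)]
  have hB3 : B^3 < A^3 := by
    exact pow_lt_pow_left₀ (n := 3) hBA hBpos.le (by norm_num)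
  have hD : 0 < A^3 - B^3 := by linarith
  have hDpow : 0 < (A^3 - B^3) ^ ((2:ℝ)/3) := Real.rpow_pos_of_pos hD _
  rw [lt_div_iff₀ hDpow]
  have ht0 : 0 ≤ c^3*A^3 := by positivity
  have ht1 : c^3*A^3 ≤ 1/8 := by
    have e0 : c^3*A^3 = (c*A)^3 := by ring
    have : (c*A)^3 ≤ (1/2)^3 := pow_le_pow_left₀ (by positivity) hcA 3
    rw [e0]; linarith
  have h1m : 0 < 1 - c^3*A^3 := by linarith
  have hfrac : A^2 - c^3*A^5 ≤ (A^3 - B^3) ^ ((2:ℝ)/3) := by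
    have hAB3 : A^3 - B^3 = A^3*(1-c^3*A^3) := by rw [hB]; ring
    rw [hAB3, Real.mul_rpow (by positivity) h1m.le]
    have e1 : (A^3:ℝ) ^ ((2:ℝ)/3) = A^2 := by
      have e2 : ((3:ℕ):ℝ) * ((2:ℝ)/3) = ((2:ℕ):ℝ) := by norm_num
      rw [← Real.rpow_natCast A 3, ← Real.rpow_mul hApos.le, e2, Real.rpow_natCast]
    rw [e1]
    have e3 : (1-c^3*A^3) ≤ (1-c^3*A^3) ^ ((2:ℝ)/3) := by
      nth_rewrite 1 [← Real.rpow_one (1-c^3*A^3)]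
      exact Real.rpow_le_rpow_of_exponent_ge h1m (by linarith) (by norm_num)
    calc A^2 - c^3*A^5 = A^2*(1-c^3*A^3) := by ring
      _ ≤ A^2*((1-c^3*A^3) ^ ((2:ℝ)/3)) := mul_le_mul_of_nonneg_left e3 (by positivity)
  have stepB : h2 e * (A^3-B^3)^((2:ℝ)/3) ≤ h2 e * (A^2 - c^3*A^5) :=
    mul_le_mul_of_nonpos_left hfrac hd2neg.le
  have hmem1 : e + A + B ∈ Set.Icc (e-δ) (e+δ) := by
    constructor
    · linarith [hApos, hBpos, hδpos]
    · linarith [hABδ]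
  have hmem2 : e - A + B ∈ Set.Icc (e-δ) (e+δ) := by
    constructor
    · linarith [hAδ, hBpos]
    · linarith [hBA, hδpos]
  have t1 := hTay (e+A+B) hmem1
  have t2 := hTay (e-A+B) hmem2
  unfold ph0 at t1 t2
  rw [show e + A + B - e = A + B by ring] at t1
  rw [show e - A + B - e = B - A by ring] at t2
  have hA2δ : A^2 ≤ δ^2 := pow_le_pow_left₀ hApos.le hAδ 2
  have hA4δ : A^4 ≤ δ^4 := pow_le_pow_left₀ hApos.le hAδ 4
  have hbound : 2*M*(1+6*c^2*A^2+c^4*A^4) + (-(h2 e))*c^3*A < c * h3 e / 2 := by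
    have b1 : 2*M*(1+6*c^2*A^2+c^4*A^4) ≤ 2*M*(1+6*c^2*δ^2+c^4*δ^4) := by
      apply mul_le_mul_of_nonneg_left _ (by positivity)
      have q1 : 6*c^2*A^2 ≤ 6*c^2*δ^2 := by
        apply mul_le_mul_of_nonneg_left hA2δ (by positivity)
      have q2 : c^4*A^4 ≤ c^4*δ^4 := by
        apply mul_le_mul_of_nonneg_left hA4δ (by positivity)
      linarith
    have b2 : (-(h2 e))*c^3*A ≤ (-(h2 e))*c^3*δ := by
      apply mul_le_mul_of_nonneg_left hAδ
      exact mul_nonneg (by linarith) (by positivity)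
    linarith
  have hcoef : h2 e * c^2 + h3 e * c = c * h3 e / 2 := by
    linear_combination c * hc2
  have hSlin : 0 < (h2 e*c^2 + h3 e*c) - (2*M*(1+6*c^2*A^2+c^4*A^4) + (-(h2 e))*c^3*A) := by
    rw [hcoef]; linarith
  have hA4pos : 0 < A^4 := by positivity
  have hprod : 0 < A^4 * ((h2 e*c^2 + h3 e*c) - (2*M*(1+6*c^2*A^2+c^4*A^4) + (-(h2 e))*c^3*A)) :=
    mul_pos hA4pos hSlin
  have hA6 : 0 ≤ A^6 * h3 e * c^3 / 3 := by positivity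
  have hid : h2 e*(A^2-c^3*A^5)
      + A^4 * ((h2 e*c^2 + h3 e*c) - (2*M*(1+6*c^2*A^2+c^4*A^4) + (-(h2 e))*c^3*A))
      + A^6 * h3 e * c^3 / 3
      = h2 e*((A+B)^2+(B-A)^2)/2 + h3 e*((A+B)^3+(B-A)^3)/6 - M*((A+B)^4+(B-A)^4) := by
    rw [hB]; ring
  linarith [t1, t2, stepB, hprod, hA6, hid]
end
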